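/- arXiv:2510.25681 — 4 statements merged into one kernel-verified Lean document; each statement's English description precedes it below -/
import Mathlib

section
/- Let O^k_d = {ω·ℓ^{d-k} : ω homogeneous of degree k, ℓ linear form} be the affine cone over the k-th osculating variety to the degree-d Veronese variety in the space of degree-d forms in n+1 variables, with 0 ≤ k < d. At a point f = ω·ℓ^{d-k} with ℓ not dividing ω, the tangent space T_f(O^k_d) = span{θ·ℓ^{d-k} + ω·λ·ℓ^{d-k-1} : θ ∈ S_k, λ ∈ S_1} has dimension binom(k+n, k) + n, while at a point where ℓ divides ω the tangent space has dimension binom(k+n, k). Hence the singular locus of O^k_d is O^{k-1}_d. -/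
open MvPolynomial Finset

section Aux
variable {K : Type*} [Field K] {n : ℕ}


-- counting: stars and bars for homogeneous polynomials
noncomputable def degSymEquiv (α : Type*) [DecidableEq α] (d : ℕ) :
    {s : α →₀ ℕ // s.degree = d} ≃ Sym α d where
  toFun s := ⟨Finsupp.toMultiset s.1, by
    rw [Finsupp.card_toMultiset]; exact s.2⟩
  invFun m := ⟨Multiset.toFinsupp m.1, by
    have := Multiset.toFinsupp_sum_eq (m.1)
    rw [show (Multiset.toFinsupp m.1).degree = (Multiset.toFinsupp m.1).sum fun _ => id from rfl]
    rw [this]; exact m.2⟩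
  left_inv s := by ext : 1; simp
  right_inv m := by
    apply Subtype.ext
    simp [Sym.val_eq_coe]

noncomputable instance degFintype (α : Type*) [DecidableEq α] [Fintype α] (d : ℕ) :
    Fintype {s : α →₀ ℕ // s.degree = d} :=
  Fintype.ofEquiv _ (degSymEquiv α d).symm

lemma card_deg (n d : ℕ) :
    Fintype.card {s : Fin (n+1) →₀ ℕ // s.degree = d} = (d + n).choose d := by
  rw [Fintype.card_congr (degSymEquiv (Fin (n+1)) d), Sym.card_sym_eq_choose]
  congr 1
  simp [Fintype.card_fin]; omega


variable {K : Type*} [Field K]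

lemma homog_eq_restrict (n d : ℕ) :
    homogeneousSubmodule (Fin (n+1)) K d
      = MvPolynomial.restrictSupport K {s : Fin (n+1) →₀ ℕ | s.degree = d} :=
  homogeneousSubmodule_eq_finsupp_supported _ _ _

noncomputable def homogBasis (n d : ℕ) :
    Module.Basis {s : Fin (n+1) →₀ ℕ // s.degree = d} K (homogeneousSubmodule (Fin (n+1)) K d) :=
  (MvPolynomial.basisRestrictSupport K {s : Fin (n+1) →₀ ℕ | s.degree = d}).map
    (LinearEquiv.ofEq _ _ (homog_eq_restrict n d).symm)

instance homogFD (n d : ℕ) : FiniteDimensional K (homogeneousSubmodule (Fin (n+1)) K d) :=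
  Module.Finite.of_basis (homogBasis n d)

lemma finrank_homog (n d : ℕ) :
    Module.finrank K ↥(homogeneousSubmodule (Fin (n+1)) K d) = (d + n).choose d := by
  exact (Module.finrank_eq_card_basis (homogBasis (K := K) n d)).trans (card_deg n d)



lemma hom0_eq_C {p : MvPolynomial σ K} (h : p.IsHomogeneous 0) :
    p = C (coeff 0 p) := by
  classical
  ext d
  by_cases hd : d = 0
  · subst hd; simp
  · rw [h.coeff_eq_zero (by simpa [Finsupp.degree_eq_zero_iff] using hd), coeff_C,
      if_neg (fun hc => hd hc.symm)]

lemma quot_homog {ℓ q : MvPolynomial σ K} {e m : ℕ} (hl : ℓ.IsHomogeneous e)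
    (hl0 : ℓ ≠ 0) (h : (ℓ * q).IsHomogeneous m) (hem : e ≤ m) :
    q.IsHomogeneous (m - e) := by
  have key : ∀ i, i ≠ m - e → homogeneousComponent i q = 0 := by
    intro i hi
    by_cases hir : i ∈ range (q.totalDegree + 1)
    swap
    · exact homogeneousComponent_eq_zero i q (by simp only [Finset.mem_range] at hir; omega)
    have h1 : ℓ * q = ∑ j ∈ range (q.totalDegree + 1), ℓ * homogeneousComponent j q := by
      rw [← mul_sum, sum_homogeneousComponent]
    have h2 := congrArg (homogeneousComponent (e + i)) h1
    rw [map_sum] at h2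
    have h3 : ∀ j ∈ range (q.totalDegree + 1),
        homogeneousComponent (e + i) (ℓ * homogeneousComponent j q)
          = if j = i then ℓ * homogeneousComponent j q else 0 := by
      intro j _
      rw [homogeneousComponent_of_mem (hl.mul (homogeneousComponent_isHomogeneous j q))]
      by_cases hji : e + i = e + j
      · rw [if_pos hji, if_pos (by omega)]
      · rw [if_neg hji, if_neg (by omega)]
    rw [Finset.sum_congr rfl h3, Finset.sum_ite_eq' _ i, if_pos hir] at h2
    have h4 : homogeneousComponent (e + i) (ℓ * q) = 0 := by
      rw [homogeneousComponent_of_mem h, if_neg (by omega)]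
    rw [h4] at h2
    exact (mul_eq_zero.mp h2.symm).resolve_left hl0
  have hq : q = homogeneousComponent (m - e) q := by
    conv_lhs => rw [← sum_homogeneousComponent q]
    by_cases hr : m - e ∈ range (q.totalDegree + 1)
    · rw [Finset.sum_eq_single (m - e) (fun j _ hj => key j hj) (fun hj => absurd hr hj)]
    · rw [Finset.sum_eq_zero (fun j hj => key j (fun hje => hr (hje ▸ hj)))]
      exact (homogeneousComponent_eq_zero (m - e) q (by simp only [mem_range] at hr; omega)).symm
  rw [hq]
  exact homogeneousComponent_isHomogeneous _ _



lemma deg_one {σ : Type*} {d : σ →₀ ℕ} (h : d.degree = 1) :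
    ∃ i, d = Finsupp.single i 1 := by
  classical
  have hd0 : d ≠ 0 := fun h0 => by simp [h0] at h
  obtain ⟨i, hi⟩ := Finsupp.ne_iff.mp hd0
  simp only [Finsupp.coe_zero, Pi.zero_apply] at hi
  have hdi : d i = 1 := le_antisymm (h ▸ Finsupp.le_degree i d) (by omega)
  refine ⟨i, ?_⟩
  ext j
  rcases eq_or_ne j i with rfl | hj
  · simp [hdi]
  · rw [Finsupp.single_apply, if_neg (fun hc => hj hc.symm)]
    by_contra hdj
    have hji : d j ≠ 0 := hdj
    have hsub : {i, j} ⊆ d.support := by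
      intro x hx
      simp only [mem_insert, mem_singleton] at hx
      rcases hx with rfl | rfl <;> simp [Finsupp.mem_support_iff, hi, hji]
    have : d i + d j ≤ d.degree := by
      rw [Finsupp.degree]
      calc d i + d j = ∑ x ∈ {i, j}, d x := by
            rw [Finset.sum_insert (by simpa using fun hc => hj hc.symm), Finset.sum_singleton]
      _ ≤ _ := Finset.sum_le_sum_of_subset hsub
    omega

lemma hom1_rep [DecidableEq (Fin (n+1))] (ℓ : MvPolynomial (Fin (n+1)) K)
    (hℓ : ℓ.IsHomogeneous 1) :
    ℓ = ∑ i, C (coeff (Finsupp.single i 1) ℓ) * X i := by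
  ext d
  rw [coeff_sum]
  simp_rw [coeff_C_mul, coeff_X']
  by_cases hd : ∃ i, d = Finsupp.single i 1
  · obtain ⟨j, rfl⟩ := hd
    rw [Finset.sum_eq_single j]
    · rw [if_pos rfl, mul_one]
    · intro i _ hij
      rw [if_neg (fun hc => hij (by
        have := (Finsupp.single_left_injective (one_ne_zero (α := ℕ))) hc; exact this)), mul_zero]
    · intro hj; exact absurd (Finset.mem_univ j) hj
  · rw [Finset.sum_eq_zero (fun i _ => by
      rw [if_neg (fun hc => hd ⟨i, hc.symm⟩), mul_zero])]
    by_contra hc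
    refine hd (deg_one ?_)
    rw [Finsupp.degree_eq_weight_one]
    exact hℓ hc




lemma prime_X_mv (j : Fin (n+1)) : Prime (X j : MvPolynomial (Fin (n+1)) K) := by
  have h0 : Prime (X 0 : MvPolynomial (Fin (n+1)) K) := by
    rw [← MulEquiv.prime_iff (finSuccEquiv K n).toRingEquiv.toMulEquiv]
    have : (finSuccEquiv K n) (X 0) = Polynomial.X := finSuccEquiv_X_zero
    rw [show ((finSuccEquiv K n).toRingEquiv.toMulEquiv (X 0)) = Polynomial.X from this]
    exact Polynomial.prime_X
  have := (MulEquiv.prime_iff (renameEquiv K (Equiv.swap (0 : Fin (n+1)) j)).toRingEquiv.toMulEquiv).mpr h0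
  simpa [renameEquiv, Equiv.swap_apply_left] using this

lemma linear_prime (ℓ : MvPolynomial (Fin (n+1)) K) (hℓ : ℓ.IsHomogeneous 1)
    (hℓ0 : ℓ ≠ 0) : Prime ℓ := by
  classical
  set c : Fin (n+1) → K := fun i => coeff (Finsupp.single i 1) ℓ with hc
  have hrep := hom1_rep ℓ hℓ
  have hex : ∃ j, c j ≠ 0 := by
    by_contra hall
    push_neg at hall
    apply hℓ0
    rw [hrep]
    exact Finset.sum_eq_zero fun i _ => by
      rw [show coeff (Finsupp.single i 1) ℓ = c i from rfl, hall, C_0, zero_mul]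
  obtain ⟨j, hcj⟩ := hex
  set r : MvPolynomial (Fin (n+1)) K := ∑ i ∈ univ.erase j, C (c i) * X i with hr
  have hlr : ℓ = C (c j) * X j + r := by
    rw [hrep, hr, ← Finset.add_sum_erase _ _ (mem_univ j)]
  set F : MvPolynomial (Fin (n+1)) K →ₐ[K] MvPolynomial (Fin (n+1)) K :=
    aeval (fun i => if i = j then C (c j)⁻¹ * (X j - r) else X i) with hF
  set G : MvPolynomial (Fin (n+1)) K →ₐ[K] MvPolynomial (Fin (n+1)) K :=
    aeval (fun i => if i = j then ℓ else X i) with hG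
  have hFr : F r = r := by
    rw [hr, map_sum]
    refine Finset.sum_congr rfl fun i hi => ?_
    rw [map_mul, hF, aeval_C, aeval_X, if_neg (Finset.ne_of_mem_erase hi), algebraMap_eq]
  have hGr : G r = r := by
    rw [hr, map_sum]
    refine Finset.sum_congr rfl fun i hi => ?_
    rw [map_mul, hG, aeval_C, aeval_X, if_neg (Finset.ne_of_mem_erase hi), algebraMap_eq]
  have hGF : G.comp F = AlgHom.id K _ := by
    apply MvPolynomial.algHom_ext
    intro i
    rw [AlgHom.comp_apply, AlgHom.id_apply]
    by_cases hij : i = j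
    · subst hij
      have h1 : F (X i) = C (c i)⁻¹ * (X i - r) := by rw [hF]; rw [aeval_X, if_pos rfl]
      have h2 : G (C (c i)⁻¹) = C (c i)⁻¹ := by rw [hG]; rw [aeval_C, algebraMap_eq]
      have h3 : G (X i) = ℓ := by rw [hG]; rw [aeval_X, if_pos rfl]
      rw [h1, map_mul, map_sub, h2, h3, hGr, hlr, add_sub_cancel_right, ← mul_assoc,
        ← C_mul, inv_mul_cancel₀ hcj, C_1, one_mul]
    · have h1 : F (X i) = X i := by rw [hF]; rw [aeval_X, if_neg hij]
      have h2 : G (X i) = X i := by rw [hG]; rw [aeval_X, if_neg hij]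
      rw [h1, h2]
  have hFG : F.comp G = AlgHom.id K _ := by
    apply MvPolynomial.algHom_ext
    intro i
    rw [AlgHom.comp_apply, AlgHom.id_apply]
    by_cases hij : i = j
    · subst hij
      have h1 : G (X i) = ℓ := by rw [hG]; rw [aeval_X, if_pos rfl]
      have h2 : F (C (c i)) = C (c i) := by rw [hF]; rw [aeval_C, algebraMap_eq]
      have h3 : F (X i) = C (c i)⁻¹ * (X i - r) := by rw [hF]; rw [aeval_X, if_pos rfl]
      rw [h1, hlr, map_add, map_mul, h2, h3, hFr, ← mul_assoc, ← C_mul,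
        mul_inv_cancel₀ hcj, C_1, one_mul, sub_add_cancel]
    · have h1 : G (X i) = X i := by rw [hG]; rw [aeval_X, if_neg hij]
      have h2 : F (X i) = X i := by rw [hF]; rw [aeval_X, if_neg hij]
      rw [h1, h2]
  set e : MvPolynomial (Fin (n+1)) K ≃ₐ[K] MvPolynomial (Fin (n+1)) K :=
    AlgEquiv.ofAlgHom G F hGF hFG with he
  have hej : e (X j) = ℓ := by
    show G (X j) = ℓ
    rw [hG]; rw [aeval_X, if_pos rfl]
  have := (MulEquiv.prime_iff e.toRingEquiv.toMulEquiv).mpr (prime_X_mv j)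
  rw [show e.toRingEquiv.toMulEquiv (X j) = ℓ from hej] at this
  exact this

end Aux

/-- At a point `f = ω ℓ^{d-k}` of the (affine cone over the) `k`-th
osculating variety `O^k_d` of the degree-`d` Veronese variety, the tangent space
`T_f = span{θ ℓ^{d-k} + ω λ ℓ^{d-k-1} : θ ∈ S_k, λ ∈ S_1}` has dimension
`binom(k+n,k) + n` when `ℓ ∤ ω` (smooth points), and dimension `binom(k+n,k)` when
`ℓ ∣ ω`; hence the singular locus of `O^k_d` is `O^{k-1}_d`. -/


theorem osculating_tangent_dim {K : Type*} [Field K] [IsAlgClosed K] [CharZero K]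
    {n d k : ℕ} (hkd : k < d) (ω ℓ : MvPolynomial (Fin (n + 1)) K)
    (hω : ω.IsHomogeneous k) (hℓ : ℓ.IsHomogeneous 1) (hω0 : ω ≠ 0) (hℓ0 : ℓ ≠ 0) :
    (¬ ℓ ∣ ω →
      Module.finrank K ↥(Submodule.span K
        {p : MvPolynomial (Fin (n + 1)) K | ∃ θ lam : MvPolynomial (Fin (n + 1)) K,
          θ.IsHomogeneous k ∧ lam.IsHomogeneous 1 ∧
            p = θ * ℓ ^ (d - k) + ω * lam * ℓ ^ (d - k - 1)})
        = (k + n).choose k + n) ∧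
    (ℓ ∣ ω →
      Module.finrank K ↥(Submodule.span K
        {p : MvPolynomial (Fin (n + 1)) K | ∃ θ lam : MvPolynomial (Fin (n + 1)) K,
          θ.IsHomogeneous k ∧ lam.IsHomogeneous 1 ∧
            p = θ * ℓ ^ (d - k) + ω * lam * ℓ ^ (d - k - 1)})
        = (k + n).choose k) := by
  have hprime : Prime ℓ := linear_prime ℓ hℓ hℓ0
  have hpow : ℓ ^ (d - k) = ℓ ^ (d - k - 1) * ℓ := by
    rw [← pow_succ]; congr 1; omega
  have hpn : (ℓ : MvPolynomial (Fin (n+1)) K) ^ (d - k) ≠ 0 := pow_ne_zero _ hℓ0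
  have hpn1 : (ℓ : MvPolynomial (Fin (n+1)) K) ^ (d - k - 1) ≠ 0 := pow_ne_zero _ hℓ0
  set A : Submodule K (MvPolynomial (Fin (n+1)) K) :=
    (homogeneousSubmodule (Fin (n+1)) K k).map (LinearMap.mulRight K (ℓ ^ (d - k))) with hA
  set B : Submodule K (MvPolynomial (Fin (n+1)) K) :=
    (homogeneousSubmodule (Fin (n+1)) K 1).map
      (LinearMap.mulRight K (ω * ℓ ^ (d - k - 1))) with hB
  have hspan : Submodule.span K
      {p : MvPolynomial (Fin (n + 1)) K | ∃ θ lam : MvPolynomial (Fin (n + 1)) K,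
        θ.IsHomogeneous k ∧ lam.IsHomogeneous 1 ∧
          p = θ * ℓ ^ (d - k) + ω * lam * ℓ ^ (d - k - 1)} = A ⊔ B := by
    apply le_antisymm
    · rw [Submodule.span_le]
      rintro p ⟨θ, lam, hθ, hlam, rfl⟩
      apply Submodule.add_mem_sup
      · exact ⟨θ, hθ, rfl⟩
      · exact ⟨lam, hlam, by rw [LinearMap.mulRight_apply]; ring⟩
    · apply sup_le
      · rintro x ⟨θ, hθ, rfl⟩
        apply Submodule.subset_span
        exact ⟨θ, 0, hθ, isHomogeneous_zero _ _ _, by simp [LinearMap.mulRight_apply]⟩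
      · rintro x ⟨lam, hlam, rfl⟩
        apply Submodule.subset_span
        exact ⟨0, lam, isHomogeneous_zero _ _ _, hlam, by
          rw [LinearMap.mulRight_apply]; ring⟩
  have hinjA : Function.Injective (LinearMap.mulRight K (ℓ ^ (d - k))) := by
    intro x y hxy
    simp only [LinearMap.mulRight_apply] at hxy
    exact mul_right_cancel₀ hpn hxy
  have hinjB : Function.Injective (LinearMap.mulRight K (ω * ℓ ^ (d - k - 1))) := by
    intro x y hxy
    simp only [LinearMap.mulRight_apply] at hxy
    exact mul_right_cancel₀ (mul_ne_zero hω0 hpn1) hxy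
  have eA := Submodule.equivMapOfInjective _ hinjA (homogeneousSubmodule (Fin (n+1)) K k)
  have eB := Submodule.equivMapOfInjective _ hinjB (homogeneousSubmodule (Fin (n+1)) K 1)
  haveI : FiniteDimensional K A := Module.Finite.equiv eA
  haveI : FiniteDimensional K B := Module.Finite.equiv eB
  have hrA : Module.finrank K A = (k + n).choose k := by
    rw [← LinearEquiv.finrank_eq eA, finrank_homog]
  have hrB : Module.finrank K B = n + 1 := by
    rw [← LinearEquiv.finrank_eq eB, finrank_homog, Nat.choose_one_right]
    omega
  constructor
  · intro hndvd
    have hABinf : A ⊓ B = Submodule.span K {ω * ℓ ^ (d - k)} := by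
      apply le_antisymm
      · rintro x ⟨⟨θ, hθ, hθx⟩, ⟨lam, hlam, hlamx⟩⟩
        simp only [LinearMap.mulRight_apply] at hθx hlamx
        have hkey : θ * ℓ = ω * lam := by
          apply mul_right_cancel₀ hpn1
          calc θ * ℓ * ℓ ^ (d - k - 1) = θ * ℓ ^ (d - k) := by rw [hpow]; ring
          _ = ω * lam * ℓ ^ (d - k - 1) := by rw [hθx, ← hlamx]; ring
        have hdvd : ℓ ∣ ω * lam := ⟨θ, by rw [← hkey]; ring⟩
        rcases hprime.dvd_mul.mp hdvd with h | h
        · exact absurd h hndvd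
        · obtain ⟨u, rfl⟩ := h
          have hu : u.IsHomogeneous 0 := by
            have := quot_homog hℓ hℓ0 (m := 1) hlam le_rfl
            simpa using this
          rw [Submodule.mem_span_singleton]
          obtain ⟨cu, hcu⟩ : ∃ cu, u = C cu := ⟨_, hom0_eq_C hu⟩
          refine ⟨cu, ?_⟩
          rw [← hlamx, hcu, smul_eq_C_mul, hpow]
          ring
      · rw [Submodule.span_le, Set.singleton_subset_iff]
        refine ⟨⟨ω, hω, by simp [LinearMap.mulRight_apply]⟩,
          ⟨ℓ, hℓ, by simp [LinearMap.mulRight_apply, hpow]; ring⟩⟩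
    have hrinf : Module.finrank K ↥(A ⊓ B) = 1 := by
      rw [hABinf]
      exact finrank_span_singleton (mul_ne_zero hω0 hpn)
    have hsum := Submodule.finrank_sup_add_finrank_inf_eq A B
    rw [hrinf, hrA, hrB] at hsum
    rw [hspan]
    omega
  · intro hdvd
    obtain ⟨ω', rfl⟩ := hdvd
    have hk1 : 1 ≤ k := by
      by_contra hk
      have hk0 : k = 0 := by omega
      subst hk0
      have hCC : (ℓ * ω') = C (coeff 0 (ℓ * ω')) := hom0_eq_C hω
      have hc0 : coeff 0 (ℓ * ω') ≠ 0 := fun hc => hω0 (by rw [hCC, hc, C_0])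
      have hunit : IsUnit ℓ := by
        apply isUnit_of_dvd_unit (Dvd.intro ω' rfl)
        rw [hCC]
        exact isUnit_iff_exists_inv.mpr ⟨C (coeff 0 (ℓ * ω'))⁻¹, by
          rw [← C_mul, mul_inv_cancel₀ hc0, C_1]⟩
      exact hprime.not_unit hunit
    have hω' : ω'.IsHomogeneous (k - 1) := quot_homog hℓ hℓ0 hω (by omega)
    have hω'0 : ω' ≠ 0 := fun hc => hω0 (by rw [hc, mul_zero])
    have hBA : B ≤ A := by
      rintro x ⟨lam, hlam, rfl⟩
      refine ⟨ω' * lam, ?_, ?_⟩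
      · have := hω'.mul hlam
        rwa [show k - 1 + 1 = k by omega] at this
      · simp only [LinearMap.mulRight_apply]
        rw [hpow]; ring
    rw [hspan, sup_eq_left.mpr hBA]
    exact hrA
end

section
/- Let f = ω·ℓ^{d-k} be a homogeneous polynomial of degree d, where ω has degree k ≤ d and ℓ = x_0 + ξ_1 x_1 + ... + ξ_n x_n. Write ω = Σ_{j=0}^k ω_j ℓ^{k-j} with ω_j homogeneous of degree j in x_1,...,x_n, and set ω^{d,ℓ,x}(z) := (1/d!) Σ_{j=0}^k (d-j)! ω_j(z). Then the functional on K[x_1,...,x_n]_{≤d} given by p ↦ ⟨f, h_0(p)⟩_apolar (where h_0 is homogenization in degree d by x_0) coincides with the truncation to degree ≤ d of the polynomial-exponential functional p ↦ (ω^{d,ℓ,x}(∂_x) p)(ξ). -/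
open MvPolynomial

/-- `∂^β f`: the iterated partial derivative of `f` prescribed by the multi-index `β`. -/
noncomputable def dpow {K : Type*} [CommSemiring K] {σ : Type*} (β : σ →₀ ℕ)
    (f : MvPolynomial σ K) : MvPolynomial σ K :=
  ∑ α ∈ f.support,
    monomial (α - β) ((∏ i ∈ β.support, ((α i).descFactorial (β i) : K)) * f.coeff α)

/-- `g(∂_x)(f)`: the differential operator obtained substituting `x_i ↦ ∂/∂x_i` in `g`,
applied to `f`. -/
noncomputable def diffOp {K : Type*} [CommSemiring K] {σ : Type*}
    (g f : MvPolynomial σ K) : MvPolynomial σ K :=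
  ∑ β ∈ g.support, g.coeff β • dpow β f

/-- The apolar product `⟨f,g⟩ = (1/d!) g(∂_x)(f)` of two degree-`d` forms. -/
noncomputable def apol {K : Type*} [Field K] {σ : Type*} (d : ℕ)
    (f g : MvPolynomial σ K) : K :=
  (Nat.factorial d : K)⁻¹ * constantCoeff (diffOp g f)

/-- Degree-`d` homogenization with respect to a new variable `x_0`:
`h_0(p) = x_0^d p(x_1/x_0, …, x_n/x_0)`. -/
noncomputable def hom0 {K : Type*} [CommSemiring K] {n : ℕ} (d : ℕ)
    (p : MvPolynomial (Fin n) K) : MvPolynomial (Fin (n + 1)) K :=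
  ∑ β ∈ p.support,
    monomial (Finsupp.mapDomain Fin.succ β + Finsupp.single 0 (d - β.sum fun _ e => e))
      (p.coeff β)

/-! ### Auxiliary lemmas -/

lemma coeff_dpow {K : Type*} [CommSemiring K] {σ : Type*} (β γ : σ →₀ ℕ)
    (f : MvPolynomial σ K) :
    coeff γ (dpow β f) =
      (∏ i ∈ β.support, (((γ + β) i).descFactorial (β i) : K)) * f.coeff (γ + β) := by
  classical
  rw [dpow, coeff_sum]
  rw [Finset.sum_eq_single (γ + β)]
  · rw [coeff_monomial, add_tsub_cancel_right, if_pos rfl]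
  · intro b _ hne
    rw [coeff_monomial]
    split_ifs with h
    · have hnle : ¬ β ≤ b := by
        intro hle
        exact hne (by rw [← h, tsub_add_cancel_of_le hle])
      obtain ⟨i, hi⟩ : ∃ i, b i < β i := by
        by_contra hc
        push_neg at hc
        exact hnle (Finsupp.le_def.mpr fun i => hc i)
      have hi' : i ∈ β.support := Finsupp.mem_support_iff.mpr (by omega)
      rw [Finset.prod_eq_zero hi' (by
        rw [Nat.descFactorial_eq_zero_iff_lt.mpr hi, Nat.cast_zero]), zero_mul]
    · rfl
  · intro h
    simp [notMem_support_iff.mp h]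

lemma constCoeff_diffOp {K : Type*} [CommSemiring K] {σ : Type*}
    (g f : MvPolynomial σ K) :
    constantCoeff (diffOp g f) =
      ∑ γ ∈ g.support, coeff γ g *
        ((∏ i ∈ γ.support, ((γ i).factorial : K)) * coeff γ f) := by
  classical
  show coeff 0 _ = _
  rw [diffOp, coeff_sum]
  refine Finset.sum_congr rfl fun γ _ => ?_
  rw [coeff_smul, coeff_dpow, zero_add, smul_eq_mul]
  congr 2
  exact Finset.prod_congr rfl fun i _ => by rw [Nat.descFactorial_self]

lemma eval_diffOp_superset {K : Type*} [CommSemiring K] {σ : Type*} [Fintype σ]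
    (ξ : σ → K) {g : MvPolynomial σ K} {S : Finset (σ →₀ ℕ)} (hS : g.support ⊆ S)
    (f : MvPolynomial σ K) :
    eval ξ (diffOp g f) = ∑ β ∈ S, coeff β g * eval ξ (dpow β f) := by
  rw [diffOp, map_sum]
  rw [Finset.sum_subset hS]
  · exact Finset.sum_congr rfl fun β _ => by rw [smul_eval]
  · intro β _ hβ
    rw [notMem_support_iff.mp hβ, zero_smul, map_zero]

lemma eval_dpow {K : Type*} [CommSemiring K] {σ : Type*} [Fintype σ]
    (ξ : σ → K) (β : σ →₀ ℕ) (p : MvPolynomial σ K) :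
    eval ξ (dpow β p) = ∑ α ∈ p.support,
      (∏ i, ((α i).descFactorial (β i) : K)) * p.coeff α * ∏ i, ξ i ^ ((α - β) i) := by
  classical
  rw [dpow, map_sum]
  refine Finset.sum_congr rfl fun α _ => ?_
  rw [eval_monomial]
  rw [Finsupp.prod_fintype _ _ (fun i => pow_zero _)]
  congr 2
  exact Finset.prod_subset (Finset.subset_univ _) (fun i _ h => by
    rw [Finsupp.notMem_support_iff.mp h, Nat.descFactorial_zero, Nat.cast_one])

lemma coeff_linear_pow {K : Type*} [CommSemiring K] {N : ℕ} (c : Fin N → K) (m : ℕ)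
    (δ : Fin N →₀ ℕ) :
    (∏ i, ((δ i).factorial : K)) * coeff δ ((∑ i, C (c i) * X i) ^ m) =
      if (∑ i, δ i) = m then (m.factorial : K) * ∏ i, c i ^ δ i else 0 := by
  induction m generalizing δ with
  | zero =>
    rw [pow_zero]
    by_cases hδ : δ = 0
    · subst hδ
      simp [coeff_one]
    · have h1 : coeff δ (1 : MvPolynomial (Fin N) K) = 0 := by
        rw [coeff_one, if_neg (by exact fun h => hδ h.symm)]
      have h2 : ¬ (∑ i, δ i) = 0 := by
        rw [Finset.sum_eq_zero_iff]
        intro hc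
        exact hδ (Finsupp.ext fun i => hc i (Finset.mem_univ i))
      rw [h1, mul_zero, if_neg h2]
  | succ m ih =>
    rw [pow_succ', Finset.sum_mul, coeff_sum]
    simp only [mul_assoc, coeff_C_mul, coeff_X_mul']
    rw [Finset.mul_sum]
    have key : ∀ i : Fin N,
        (∏ j, ((δ j).factorial : K)) * (c i *
          (if i ∈ δ.support then
            coeff (δ - (Finsupp.single i 1 : Fin N →₀ ℕ)) ((∑ i, C (c i) * X i) ^ m) else 0))
        = if (∑ j, δ j) = m + 1 then (δ i : K) * ((m.factorial : K) * ∏ j, c j ^ δ j) else 0 := by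
      intro i
      by_cases hi : i ∈ δ.support
      · have hδi : δ i ≠ 0 := Finsupp.mem_support_iff.mp hi
        have happ : ∀ j, (δ - (Finsupp.single i 1 : Fin N →₀ ℕ)) j
            = if j = i then δ i - 1 else δ j := by
          intro j
          rw [Finsupp.tsub_apply, Finsupp.single_apply]
          by_cases h : j = i
          · subst h; rw [if_pos rfl, if_pos rfl]
          · rw [if_neg (fun hh => h hh.symm), if_neg h, tsub_zero]
        have hfact : (∏ j, ((δ j).factorial : K))
            = (δ i : K) * ∏ j, (((δ - (Finsupp.single i 1 : Fin N →₀ ℕ)) j).factorial : K) := by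
          rw [← Finset.mul_prod_erase Finset.univ _ (Finset.mem_univ i),
            ← Finset.mul_prod_erase Finset.univ
              (fun j => (((δ - (Finsupp.single i 1 : Fin N →₀ ℕ)) j).factorial : K))
              (Finset.mem_univ i)]
          rw [happ i, if_pos rfl, ← mul_assoc, ← Nat.cast_mul,
            Nat.mul_factorial_pred (by omega)]
          congr 1
          refine Finset.prod_congr rfl fun j hj => ?_
          rw [happ j, if_neg (Finset.mem_erase.mp hj).1]
        have hsum : (∑ j, (δ - (Finsupp.single i 1 : Fin N →₀ ℕ)) j) + 1 = ∑ j, δ j := by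
          rw [← Finset.sum_erase_add _ _ (Finset.mem_univ i),
            ← Finset.sum_erase_add _ (fun j => δ j) (Finset.mem_univ i), happ i, if_pos rfl]
          have : ∑ j ∈ Finset.univ.erase i, (δ - (Finsupp.single i 1 : Fin N →₀ ℕ)) j
              = ∑ j ∈ Finset.univ.erase i, δ j :=
            Finset.sum_congr rfl fun j hj => by rw [happ j, if_neg (Finset.mem_erase.mp hj).1]
          omega
        have hprod : c i * (∏ j, c j ^ ((δ - (Finsupp.single i 1 : Fin N →₀ ℕ)) j))
            = ∏ j, c j ^ δ j := by
          rw [← Finset.mul_prod_erase Finset.univ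
              (fun j => c j ^ ((δ - (Finsupp.single i 1 : Fin N →₀ ℕ)) j)) (Finset.mem_univ i),
            ← Finset.mul_prod_erase Finset.univ (fun j => c j ^ δ j) (Finset.mem_univ i),
            happ i, if_pos rfl, ← mul_assoc, ← pow_succ', Nat.sub_add_cancel (by omega)]
          congr 1
          refine Finset.prod_congr rfl fun j hj => ?_
          rw [happ j, if_neg (Finset.mem_erase.mp hj).1]
        rw [if_pos hi, hfact, mul_mul_mul_comm, ih]
        by_cases hs : (∑ j, δ j) = m + 1
        · rw [if_pos (by omega), if_pos hs, ← hprod]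
          ring
        · rw [if_neg (by omega), if_neg hs, mul_zero]
      · rw [if_neg hi, mul_zero, mul_zero]
        have hδi : δ i = 0 := Finsupp.notMem_support_iff.mp hi
        split_ifs
        · rw [hδi, Nat.cast_zero, zero_mul]
        · rfl
    rw [Finset.sum_congr rfl fun i _ => key i]
    by_cases hs : (∑ j, δ j) = m + 1
    · simp only [if_pos hs]
      rw [← Finset.sum_mul,
        show (∑ i, ((δ i : K))) = ((∑ i, δ i : ℕ) : K) by push_cast; rfl, hs,
        ← mul_assoc, ← Nat.cast_mul, Nat.factorial_succ]
    · simp [hs]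

/-- exponent map of the homogenization -/
noncomputable def gmap {n : ℕ} (d : ℕ) (α : Fin n →₀ ℕ) : Fin (n + 1) →₀ ℕ :=
  Finsupp.mapDomain Fin.succ α + Finsupp.single 0 (d - α.sum fun _ e => e)

lemma gmap_apply_succ {n d : ℕ} (α : Fin n →₀ ℕ) (i : Fin n) :
    gmap d α i.succ = α i := by
  rw [gmap, Finsupp.add_apply, Finsupp.mapDomain_apply (Fin.succ_injective n),
    Finsupp.single_apply, if_neg (Fin.succ_ne_zero i).symm, add_zero]

lemma gmap_apply_zero {n d : ℕ} (α : Fin n →₀ ℕ) :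
    gmap d α 0 = d - α.sum fun _ e => e := by
  rw [gmap, Finsupp.add_apply, Finsupp.mapDomain_notin_range _ _ (by
    rintro ⟨i, hi⟩; exact Fin.succ_ne_zero i hi), Finsupp.single_apply, if_pos rfl, zero_add]

lemma gmap_injective {n d : ℕ} : Function.Injective (gmap (n := n) d) := by
  intro a b h
  ext i
  rw [← gmap_apply_succ (d := d) a i, ← gmap_apply_succ (d := d) b i, h]

lemma hom0_eq {K : Type*} [CommSemiring K] {n d : ℕ} (p : MvPolynomial (Fin n) K) :
    hom0 d p = ∑ β ∈ p.support, monomial (gmap d β) (p.coeff β) := rfl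

lemma coeff_gmap_hom0 {K : Type*} [CommSemiring K] {n d : ℕ}
    (p : MvPolynomial (Fin n) K) (α : Fin n →₀ ℕ) :
    coeff (gmap d α) (hom0 d p) = p.coeff α := by
  classical
  rw [hom0_eq, coeff_sum]
  rw [Finset.sum_eq_single α]
  · rw [coeff_monomial, if_pos rfl]
  · intro b _ hne
    rw [coeff_monomial, if_neg (fun h => hne (gmap_injective h))]
  · intro h
    rw [notMem_support_iff.mp h, coeff_monomial, if_pos rfl]

lemma support_hom0 {K : Type*} [CommSemiring K] {n d : ℕ}
    (p : MvPolynomial (Fin n) K) :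
    (hom0 d p).support ⊆ p.support.image (gmap d) := by
  intro x hx
  have hx' : coeff x (hom0 d p) ≠ 0 := mem_support_iff.mp hx
  rw [hom0_eq, coeff_sum] at hx'
  obtain ⟨α, hα, hne⟩ := Finset.exists_ne_zero_of_sum_ne_zero hx'
  rw [coeff_monomial] at hne
  have : (gmap d α : Fin (n+1) →₀ ℕ) = x := by
    by_contra hc
    exact hne (if_neg hc)
  exact Finset.mem_image.mpr ⟨α, hα, this⟩

lemma prod_factorial_support {K : Type*} [CommSemiring K] {N : Type*} [Fintype N]
    (γ : N →₀ ℕ) :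
    (∏ i ∈ γ.support, ((γ i).factorial : K)) = ∏ i, ((γ i).factorial : K) :=
  Finset.prod_subset (Finset.subset_univ _) fun i _ h => by
    rw [Finsupp.notMem_support_iff.mp h, Nat.factorial_zero, Nat.cast_one]

lemma apol_hom0 {K : Type*} [Field K] {n : ℕ} (d : ℕ) (f : MvPolynomial (Fin (n+1)) K)
    (p : MvPolynomial (Fin n) K) :
    apol d f (hom0 d p) = (d.factorial : K)⁻¹ *
      ∑ α ∈ p.support, (∏ i, (((gmap d α) i).factorial : K)) *
        (p.coeff α * coeff (gmap d α) f) := by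
  rw [apol, constCoeff_diffOp]
  congr 1
  rw [Finset.sum_subset (support_hom0 p)
    (fun γ _ hγ => by rw [notMem_support_iff.mp hγ, zero_mul])]
  rw [Finset.sum_image (fun a _ b _ h => gmap_injective h)]
  refine Finset.sum_congr rfl fun α _ => ?_
  rw [coeff_gmap_hom0, prod_factorial_support]
  ring

lemma sum_univ_finsupp {N : ℕ} (β : Fin N →₀ ℕ) :
    (∑ i, β i) = β.sum fun _ e => e :=
  (Finsupp.sum_fintype β (fun _ e => e) fun _ => rfl).symm

lemma key_monomial {K : Type*} [Field K] {n : ℕ} {d j : ℕ} (ξ : Fin n → K) (hjd : j ≤ d)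
    (α : Fin n →₀ ℕ) (hα : (∑ i, α i) ≤ d) (β : Fin n →₀ ℕ) (hβ : (∑ i, β i) = j) :
    (∏ i, (((gmap d α) i).factorial : K)) *
      coeff (gmap d α) ((monomial (Finsupp.mapDomain Fin.succ β) (1:K)) *
        (X 0 + ∑ i, C (ξ i) * X (Fin.succ i)) ^ (d - j))
    = ((d - j).factorial : K) *
        ((∏ i, ((α i).descFactorial (β i) : K)) * ∏ i, ξ i ^ ((α - β) i)) := by
  have h0range : (0 : Fin (n+1)) ∉ Set.range (Fin.succ : Fin n → Fin (n+1)) := by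
    rintro ⟨i, hi⟩; exact Fin.succ_ne_zero i hi
  have hℓ : (X 0 + ∑ i, C (ξ i) * X (Fin.succ i) : MvPolynomial (Fin (n+1)) K)
      = ∑ i : Fin (n+1), C (Fin.cases (1:K) ξ i) * X i := by
    rw [Fin.sum_univ_succ]
    simp
  rw [hℓ, coeff_monomial_mul']
  by_cases hle : β ≤ α
  · have h1 : Finsupp.mapDomain Fin.succ β ≤ gmap d α := by
      rw [Finsupp.le_def]
      intro i
      induction i using Fin.cases with
      | zero =>
        rw [Finsupp.mapDomain_notin_range _ _ h0range]
        exact Nat.zero_le _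
      | succ i =>
        rw [Finsupp.mapDomain_apply (Fin.succ_injective n), gmap_apply_succ]
        exact Finsupp.le_def.mp hle i
    rw [if_pos h1, one_mul]
    set δ := gmap d α - Finsupp.mapDomain Fin.succ β with hδ
    have hδ0 : δ 0 = d - ∑ i, α i := by
      rw [hδ, Finsupp.tsub_apply, gmap_apply_zero,
        Finsupp.mapDomain_notin_range _ _ h0range, tsub_zero, sum_univ_finsupp]
    have hδs : ∀ i : Fin n, δ i.succ = α i - β i := fun i => by
      rw [hδ, Finsupp.tsub_apply, gmap_apply_succ,
        Finsupp.mapDomain_apply (Fin.succ_injective n)]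
    have hfac : ∀ i : Fin (n+1), ((gmap d α i).factorial : K)
        = ((δ i).factorial : K) *
          ((gmap d α i).descFactorial (Finsupp.mapDomain Fin.succ β i) : K) := by
      intro i
      rw [← Nat.cast_mul, hδ, Finsupp.tsub_apply,
        Nat.factorial_mul_descFactorial (Finsupp.le_def.mp h1 i)]
    rw [Finset.prod_congr rfl (fun i _ => hfac i), Finset.prod_mul_distrib, mul_right_comm]
    have hβα : ∑ i : Fin n, β i ≤ ∑ i : Fin n, α i :=
      Finset.sum_le_sum fun i _ => Finsupp.le_def.mp hle i
    have hsub : ∑ i : Fin n, (α i - β i) + ∑ i : Fin n, β i = ∑ i : Fin n, α i := by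
      rw [← Finset.sum_add_distrib]
      exact Finset.sum_congr rfl fun i _ => Nat.sub_add_cancel (Finsupp.le_def.mp hle i)
    have hsum : (∑ i, δ i) = d - j := by
      rw [Fin.sum_univ_succ, hδ0]
      rw [Finset.sum_congr rfl fun i _ => hδs i]
      omega
    rw [coeff_linear_pow, if_pos hsum]
    have hdesc : (∏ i : Fin (n+1),
        ((gmap d α i).descFactorial (Finsupp.mapDomain Fin.succ β i) : K))
        = ∏ i : Fin n, ((α i).descFactorial (β i) : K) := by
      rw [Fin.prod_univ_succ, Finsupp.mapDomain_notin_range _ _ h0range,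
        Nat.descFactorial_zero, Nat.cast_one, one_mul]
      refine Finset.prod_congr rfl fun i _ => ?_
      rw [gmap_apply_succ, Finsupp.mapDomain_apply (Fin.succ_injective n)]
    have hxi : (∏ i : Fin (n+1), (Fin.cases (1:K) ξ i) ^ δ i)
        = ∏ i : Fin n, ξ i ^ ((α - β) i) := by
      rw [Fin.prod_univ_succ, Fin.cases_zero, one_pow, one_mul]
      refine Finset.prod_congr rfl fun i _ => ?_
      rw [Fin.cases_succ, hδs, Finsupp.tsub_apply]
    rw [hdesc, hxi]
    ring
  · obtain ⟨i, hi⟩ : ∃ i, α i < β i := by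
      by_contra hc
      push_neg at hc
      exact hle (Finsupp.le_def.mpr fun i => hc i)
    have hnle : ¬ Finsupp.mapDomain Fin.succ β ≤ gmap d α := by
      intro h
      have := Finsupp.le_def.mp h i.succ
      rw [Finsupp.mapDomain_apply (Fin.succ_injective n), gmap_apply_succ] at this
      omega
    rw [if_neg hnle, mul_zero,
      Finset.prod_eq_zero (Finset.mem_univ i)
        (by rw [Nat.descFactorial_eq_zero_iff_lt.mpr hi, Nat.cast_zero]),
      zero_mul, mul_zero]

lemma perj {K : Type*} [Field K] {n d j : ℕ} (ξ : Fin n → K) (hjd : j ≤ d)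
    (g : MvPolynomial (Fin n) K) (hg : g.IsHomogeneous j)
    (p : MvPolynomial (Fin n) K) (hp : p.totalDegree ≤ d) :
    (∑ α ∈ p.support, (∏ i, (((gmap d α) i).factorial : K)) *
        (p.coeff α * coeff (gmap d α) (rename Fin.succ g *
          (X 0 + ∑ i, C (ξ i) * X (Fin.succ i)) ^ (d - j))))
      = ((d - j).factorial : K) * eval ξ (diffOp g p) := by
  classical
  rw [eval_diffOp_superset ξ (le_refl g.support) p]
  have hexp : ∀ α : Fin n →₀ ℕ,
      coeff (gmap d α) (rename Fin.succ g *
        (X 0 + ∑ i, C (ξ i) * X (Fin.succ i)) ^ (d - j))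
      = ∑ β ∈ g.support, coeff β g *
          coeff (gmap d α) (monomial (Finsupp.mapDomain Fin.succ β) (1:K) *
            (X 0 + ∑ i, C (ξ i) * X (Fin.succ i)) ^ (d - j)) := by
    intro α
    conv_lhs => rw [g.as_sum, map_sum, Finset.sum_mul]
    rw [coeff_sum]
    refine Finset.sum_congr rfl fun β _ => ?_
    rw [rename_monomial,
      show (monomial (Finsupp.mapDomain Fin.succ β) (coeff β g) : MvPolynomial (Fin (n+1)) K)
        = C (coeff β g) * monomial (Finsupp.mapDomain Fin.succ β) 1 from by
          rw [C_mul_monomial, mul_one],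
      mul_assoc, coeff_C_mul]
  simp only [hexp, Finset.mul_sum, eval_dpow]
  rw [Finset.sum_comm]
  refine Finset.sum_congr rfl fun β hβ => Finset.sum_congr rfl fun α hα => ?_
  have hαd : (∑ i, α i) ≤ d := by
    rw [sum_univ_finsupp]
    exact le_trans (le_totalDegree hα) hp
  have hβj : (∑ i, β i) = j := by
    have h1 := hg (mem_support_iff.mp hβ)
    have h2 : Finsupp.degree β = j := by
      rw [Finsupp.degree_eq_weight_one]; exact h1
    rw [← h2, Finsupp.degree]
    exact (Finset.sum_subset (Finset.subset_univ _)
      (fun i _ h => Finsupp.notMem_support_iff.mp h)).symm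
  have hk := key_monomial ξ hjd α hαd β hβj
  linear_combination (p.coeff α * coeff β g) * hk

/-- For `f = ω ℓ^{d-k}` with `ℓ = x_0 + ξ_1 x_1 + ⋯ + ξ_n x_n`, writing
`ω = ∑_{j=0}^k ω_j ℓ^{k-j}` with `ω_j` homogeneous of degree `j` in `x_1,…,x_n` and setting
`ω^{d,ℓ,x} = (1/d!) ∑_j (d-j)! ω_j`, the functional `p ↦ ⟨f, h_0(p)⟩` on polynomials of
degree `≤ d` coincides with the (truncated) polynomial-exponential functional
`p ↦ (ω^{d,ℓ,x}(∂_x) p)(ξ)`. -/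
theorem apolar_homog_eq_polyExp {K : Type*} [Field K] [CharZero K] {n d k : ℕ}
    (hkd : k ≤ d) (ξ : Fin n → K) (ω : MvPolynomial (Fin (n + 1)) K)
    (hω : ω.IsHomogeneous k) (ωj : ℕ → MvPolynomial (Fin n) K)
    (hωj : ∀ j, (ωj j).IsHomogeneous j)
    (hdec : ω = ∑ j ∈ Finset.range (k + 1),
      rename Fin.succ (ωj j) * (X 0 + ∑ i, C (ξ i) * X (Fin.succ i)) ^ (k - j)) :
    ∀ p : MvPolynomial (Fin n) K, p.totalDegree ≤ d →
      apol d (ω * (X 0 + ∑ i, C (ξ i) * X (Fin.succ i)) ^ (d - k)) (hom0 d p)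
        = eval ξ (diffOp ((Nat.factorial d : K)⁻¹ •
            ∑ j ∈ Finset.range (k + 1), (Nat.factorial (d - j) : K) • ωj j) p) := by
  classical
  intro p hp
  set ℓ : MvPolynomial (Fin (n+1)) K := X 0 + ∑ i, C (ξ i) * X (Fin.succ i) with hℓ
  have hf : ω * ℓ ^ (d - k)
      = ∑ j ∈ Finset.range (k + 1), rename Fin.succ (ωj j) * ℓ ^ (d - j) := by
    rw [hdec, Finset.sum_mul]
    refine Finset.sum_congr rfl fun j hj => ?_
    rw [mul_assoc, ← pow_add]
    congr 2
    have := Finset.mem_range.mp hj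
    omega
  rw [hf, apol_hom0]
  have hL : (∑ α ∈ p.support, (∏ i, (((gmap d α) i).factorial : K)) *
      (p.coeff α * coeff (gmap d α)
        (∑ j ∈ Finset.range (k + 1), rename Fin.succ (ωj j) * ℓ ^ (d - j))))
      = ∑ j ∈ Finset.range (k + 1),
          ((d - j).factorial : K) * eval ξ (diffOp (ωj j) p) := by
    simp only [coeff_sum, Finset.mul_sum]
    rw [Finset.sum_comm]
    exact Finset.sum_congr rfl fun j hj =>
      perj ξ (by have := Finset.mem_range.mp hj; omega) (ωj j) (hωj j) p hp
  rw [hL]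
  -- RHS
  set S : Finset (Fin n →₀ ℕ) :=
    (Finset.range (k + 1)).biUnion (fun j => (ωj j).support) with hS
  set q : MvPolynomial (Fin n) K := (Nat.factorial d : K)⁻¹ •
      ∑ j ∈ Finset.range (k + 1), (Nat.factorial (d - j) : K) • ωj j with hq
  have hqS : q.support ⊆ S := by
    intro β hβ
    have hβ' : coeff β q ≠ 0 := mem_support_iff.mp hβ
    rw [hq, coeff_smul, coeff_sum] at hβ'
    have h2 : (∑ j ∈ Finset.range (k + 1),
        coeff β ((Nat.factorial (d - j) : K) • ωj j)) ≠ 0 := by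
      intro h
      rw [h, smul_zero] at hβ'
      exact hβ' rfl
    obtain ⟨j, hj, hne⟩ := Finset.exists_ne_zero_of_sum_ne_zero h2
    rw [coeff_smul] at hne
    have : coeff β (ωj j) ≠ 0 := by
      intro h
      rw [h, smul_zero] at hne
      exact hne rfl
    exact Finset.mem_biUnion.mpr ⟨j, hj, mem_support_iff.mpr this⟩
  rw [eval_diffOp_superset ξ hqS p]
  have hcq : ∀ β, coeff β q = (Nat.factorial d : K)⁻¹ *
      ∑ j ∈ Finset.range (k + 1), (Nat.factorial (d - j) : K) * coeff β (ωj j) := by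
    intro β
    rw [hq, coeff_smul, coeff_sum, smul_eq_mul]
    congr 1
  simp only [hcq, mul_assoc, Finset.sum_mul, Finset.mul_sum]
  rw [Finset.sum_comm]
  refine Finset.sum_congr rfl fun j hj => ?_
  rw [eval_diffOp_superset ξ
      (Finset.subset_biUnion_of_mem (fun j => (ωj j).support) hj) p]
  simp only [Finset.mul_sum]
  rfl
end

section
/- Let I ⊆ S = K[x_0,...,x_n] be a homogeneous ideal with graded quotient A = S/I, let d ≥ reg(A) (the Castelnuovo–Mumford regularity), v ∈ S_1, and suppose the multiplication map A_d → A_{d+1}, a ↦ a·v, is bijective. If B is a (vector space) basis of A_d, then the dehomogenization of B at v = 1 is a basis of the localization S/(I, v-1). -/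
open MvPolynomial

section Aux

variable {K : Type*} [CommRing K] {m : ℕ}

lemma aux_mul_comp {v : MvPolynomial (Fin m) K} (hv : v.IsHomogeneous 1)
    (g : MvPolynomial (Fin m) K) (k : ℕ) :
    homogeneousComponent (k + 1) (v * g) = v * homogeneousComponent k g := by
  conv_lhs => rw [show g = ∑ j ∈ Finset.range (g.totalDegree + 1), homogeneousComponent j g from
    (sum_homogeneousComponent g).symm]
  rw [Finset.mul_sum, map_sum]
  have hterm : ∀ j : ℕ, homogeneousComponent (k + 1) (v * homogeneousComponent j g)
      = if k = j then v * homogeneousComponent j g else 0 := by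
    intro j
    have hmem : v * homogeneousComponent j g ∈ homogeneousSubmodule (Fin m) K (j + 1) := by
      rw [mem_homogeneousSubmodule]
      have := hv.mul (homogeneousComponent_isHomogeneous j g)
      rwa [add_comm] at this
    rw [homogeneousComponent_of_mem hmem]
    simp [Nat.add_right_cancel_iff]
  simp_rw [hterm]
  rw [Finset.sum_ite_eq (Finset.range (g.totalDegree + 1)) k
    (fun j => v * homogeneousComponent j g)]
  by_cases hk : k ∈ Finset.range (g.totalDegree + 1)
  · rw [if_pos hk]
  · rw [if_neg hk]
    have : homogeneousComponent k g = 0 := by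
      apply homogeneousComponent_eq_zero
      simpa using Nat.lt_of_succ_le (Nat.succ_le_of_lt (by simpa using hk))
    rw [this, mul_zero]

lemma aux_mul_comp0 {v : MvPolynomial (Fin m) K} (hv : v.IsHomogeneous 1)
    (g : MvPolynomial (Fin m) K) :
    homogeneousComponent 0 (v * g) = 0 := by
  rw [homogeneousComponent_zero]
  have h1 : MvPolynomial.coeff 0 (v * g) = constantCoeff (v * g) := rfl
  have hv0 : constantCoeff v = 0 := by
    have : MvPolynomial.coeff 0 v = 0 := hv.coeff_eq_zero (by simp)
    exact this
  rw [h1, map_mul, hv0, zero_mul, map_zero]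

end Aux

/-- Let `I ⊆ S = K[x_0,…,x_n]` be a homogeneous ideal with graded quotient
`A = S/I`, let `v ∈ S_1` and `d ≥ reg(A)` such that multiplication by `v` from `A_d` to
`A_{d+1}` is bijective. (Since the Castelnuovo–Mumford regularity is characterized here by
the standard fact that bijectivity of multiplication by `v` in degree `d ≥ reg` persists in
all higher degrees, the combined hypothesis `d ≥ reg(A)` plus bijectivity in degree `d` is
rendered as: multiplication by `v` from degree `e` to degree `e+1` is bijective for every
`e ≥ d`, expressed below by injectivity `hinj` and surjectivity `hsurj` on homogeneous
forms modulo `I`.) If `B` is a basis of `A_d`, then the image of `B` in the localization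
`S/(I, v-1)` is a basis. -/
theorem basis_of_localization {K : Type*} [Field K] {m : ℕ} (d : ℕ)
    (I : Ideal (MvPolynomial (Fin m) K))
    (hIhom : ∀ p ∈ I, ∀ i : ℕ, (homogeneousComponent i) p ∈ I)
    (v : MvPolynomial (Fin m) K) (hv : v.IsHomogeneous 1)
    (hinj : ∀ e : ℕ, d ≤ e → ∀ p : MvPolynomial (Fin m) K,
      p.IsHomogeneous e → v * p ∈ I → p ∈ I)
    (hsurj : ∀ e : ℕ, d ≤ e → ∀ q : MvPolynomial (Fin m) K, q.IsHomogeneous (e + 1) →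
      ∃ p : MvPolynomial (Fin m) K, p.IsHomogeneous e ∧ q - v * p ∈ I)
    (B : Set (MvPolynomial (Fin m) K))
    (hBd : ∀ b ∈ B, (b : MvPolynomial (Fin m) K).IsHomogeneous d)
    (hBli : LinearIndependent K (fun b : B => Ideal.Quotient.mk I (b : MvPolynomial (Fin m) K)))
    (hBspan : Submodule.span K ((Ideal.Quotient.mk I) '' B)
      = Submodule.map (Ideal.Quotient.mkₐ K I).toLinearMap
          (homogeneousSubmodule (Fin m) K d)) :
    LinearIndependent K
        (fun b : B => Ideal.Quotient.mk (I ⊔ Ideal.span {v - 1}) (b : MvPolynomial (Fin m) K)) ∧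
      Submodule.span K ((Ideal.Quotient.mk (I ⊔ Ideal.span {v - 1})) '' B) = ⊤ := by
  set J : Ideal (MvPolynomial (Fin m) K) := I ⊔ Ideal.span {v - 1} with hJ
  have hIJ : I ≤ J := le_sup_left
  have hvsub : v - 1 ∈ J := le_sup_right (α := Ideal (MvPolynomial (Fin m) K)) (Ideal.subset_span rfl)
  have hvJ : Ideal.Quotient.mk J v = 1 := by
    rw [show (1 : MvPolynomial (Fin m) K ⧸ J) = Ideal.Quotient.mk J 1 from rfl, Ideal.Quotient.eq]
    exact hvsub
  -- Key lemma: a homogeneous element of degree d lying in J lies in I.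
  have keyA : ∀ w : MvPolynomial (Fin m) K, w.IsHomogeneous d → w ∈ J → w ∈ I := by
    intro w hw hwJ
    rw [hJ, Submodule.mem_sup] at hwJ
    obtain ⟨i, hi, z, hz, hiz⟩ := hwJ
    rw [Ideal.mem_span_singleton] at hz
    obtain ⟨g, rfl⟩ := hz
    have hiI : w - (v - 1) * g ∈ I := by
      have : w - (v - 1) * g = i := by rw [← hiz]; ring
      rwa [this]
    have hF : ∀ k : ℕ, homogeneousComponent k w - homogeneousComponent k (v * g)
        + homogeneousComponent k g ∈ I := by
      intro k
      have h1 := hIhom _ hiI k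
      have e : w - (v - 1) * g = w - v * g + g := by ring
      rw [e, map_add, map_sub] at h1
      exact h1
    have hwc : ∀ k : ℕ, homogeneousComponent k w = if k = d then w else 0 :=
      fun k => homogeneousComponent_of_mem ((mem_homogeneousSubmodule _ _).mpr hw)
    have claimLow : ∀ k, k < d → homogeneousComponent k g ∈ I := by
      intro k
      induction k with
      | zero =>
        intro h0
        have := hF 0
        rw [hwc 0, if_neg (by omega), aux_mul_comp0 hv g] at this
        simpa using this
      | succ k ih =>
        intro h
        have hk : homogeneousComponent k g ∈ I := ih (by omega)
        have h1 := hF (k + 1)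
        rw [hwc (k + 1), if_neg (by omega), aux_mul_comp hv g k] at h1
        have : homogeneousComponent (k + 1) g
            = (0 - v * homogeneousComponent k g + homogeneousComponent (k + 1) g)
              + v * homogeneousComponent k g := by ring
        rw [this]
        exact I.add_mem h1 (I.mul_mem_left v hk)
    have claimHigh : ∀ t : ℕ, ∀ k : ℕ, d ≤ k → g.totalDegree + 1 ≤ k + t →
        homogeneousComponent k g ∈ I := by
      intro t
      induction t with
      | zero =>
        intro k _ hN
        have : homogeneousComponent k g = 0 := homogeneousComponent_eq_zero _ g (by omega)
        rw [this]; exact I.zero_mem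
      | succ t ih =>
        intro k hk hN
        have h1 : homogeneousComponent (k + 1) g ∈ I := ih (k + 1) (by omega) (by omega)
        have h2 := hF (k + 1)
        rw [hwc (k + 1), if_neg (by omega), aux_mul_comp hv g k] at h2
        have hvGk : v * homogeneousComponent k g ∈ I := by
          have : v * homogeneousComponent k g = homogeneousComponent (k + 1) g
              - (0 - v * homogeneousComponent k g + homogeneousComponent (k + 1) g) := by ring
          rw [this]
          exact I.sub_mem h1 h2
        exact hinj k hk _ (homogeneousComponent_isHomogeneous k g) hvGk
    have hGd : homogeneousComponent d g ∈ I :=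
      claimHigh (g.totalDegree + 1) d le_rfl (by omega)
    rcases Nat.eq_zero_or_pos d with hd0 | hdpos
    · subst hd0
      have h0 := hF 0
      rw [hwc 0, if_pos rfl, aux_mul_comp0 hv g] at h0
      have : w = (w - 0 + homogeneousComponent 0 g) - homogeneousComponent 0 g := by ring
      rw [this]
      exact I.sub_mem h0 hGd
    · obtain ⟨d', rfl⟩ : ∃ d', d = d' + 1 := ⟨d - 1, by omega⟩
      have h1 := hF (d' + 1)
      rw [hwc (d' + 1), if_pos rfl, aux_mul_comp hv g d'] at h1
      have hGd' : homogeneousComponent d' g ∈ I := claimLow d' (by omega)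
      have : w = (w - v * homogeneousComponent d' g + homogeneousComponent (d' + 1) g)
          + v * homogeneousComponent d' g - homogeneousComponent (d' + 1) g := by ring
      rw [this]
      exact I.sub_mem (I.add_mem h1 (I.mul_mem_left v hGd')) hGd
  constructor
  · -- linear independence
    rw [linearIndependent_iff]
    intro l hl
    set w : MvPolynomial (Fin m) K := Finsupp.linearCombination K (fun b : B => (b : MvPolynomial (Fin m) K)) l with hwdef
    have hwhom : w ∈ homogeneousSubmodule (Fin m) K d := by
      rw [hwdef, Finsupp.linearCombination_apply, Finsupp.sum]
      apply Submodule.sum_mem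
      intro b _
      exact Submodule.smul_mem _ _ ((mem_homogeneousSubmodule _ _).mpr (hBd b b.2))
    have hwJ0 : Ideal.Quotient.mk J w = 0 := by
      have := Finsupp.apply_linearCombination K (Ideal.Quotient.mkₐ K J).toLinearMap
        (fun b : B => (b : MvPolynomial (Fin m) K)) l
      rw [← hl]
      exact this
    have hwI : w ∈ I :=
      keyA w ((mem_homogeneousSubmodule _ _).mp hwhom)
        (Ideal.Quotient.eq_zero_iff_mem.mp hwJ0)
    have hlI : Finsupp.linearCombination K
        (fun b : B => Ideal.Quotient.mk I (b : MvPolynomial (Fin m) K)) l = 0 := by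
      have h2 := Finsupp.apply_linearCombination K (Ideal.Quotient.mkₐ K I).toLinearMap
        (fun b : B => (b : MvPolynomial (Fin m) K)) l
      rw [← hwdef] at h2
      have h3 : (Ideal.Quotient.mkₐ K I).toLinearMap w = 0 :=
        Ideal.Quotient.eq_zero_iff_mem.mpr hwI
      rw [h2] at h3
      exact h3
    exact linearIndependent_iff.mp hBli l hlI
  · -- spanning
    have descend : ∀ N : ℕ, ∀ q : MvPolynomial (Fin m) K, q.IsHomogeneous (d + N) →
        Ideal.Quotient.mk J q ∈ Submodule.span K (Ideal.Quotient.mk J '' B) := by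
      intro N
      induction N with
      | zero =>
        intro q hq
        rw [Nat.add_zero] at hq
        have h1 : Ideal.Quotient.mk I q ∈ Submodule.span K (Ideal.Quotient.mk I '' B) := by
          rw [hBspan]
          exact ⟨q, (mem_homogeneousSubmodule _ _).mpr hq, rfl⟩
        rw [show ((Ideal.Quotient.mk I) '' B)
            = ((Ideal.Quotient.mkₐ K I).toLinearMap '' B) from rfl,
          Submodule.span_image] at h1
        obtain ⟨r, hr, hrq⟩ := h1
        have hrI : q - r ∈ I := by
          rw [← Ideal.Quotient.eq]
          exact hrq.symm
        have : Ideal.Quotient.mk J q = Ideal.Quotient.mk J r :=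
          Ideal.Quotient.eq.mpr (hIJ hrI)
        rw [this, show ((Ideal.Quotient.mk J) '' B)
            = ((Ideal.Quotient.mkₐ K J).toLinearMap '' B) from rfl,
          Submodule.span_image]
        exact ⟨r, hr, rfl⟩
      | succ N ih =>
        intro q hq
        obtain ⟨p, hp, hqp⟩ := hsurj (d + N) (Nat.le_add_right d N) q
          (by rwa [show d + (N + 1) = d + N + 1 by ring] at hq)
        have hq1 : Ideal.Quotient.mk J q = Ideal.Quotient.mk J (v * p) :=
          Ideal.Quotient.eq.mpr (hIJ hqp)
        have hq2 : Ideal.Quotient.mk J (v * p) = Ideal.Quotient.mk J p := by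
          rw [map_mul, hvJ, one_mul]
        rw [hq1, hq2]
        exact ih p hp
    have hall : ∀ p : MvPolynomial (Fin m) K, Ideal.Quotient.mk J p
        ∈ Submodule.span K (Ideal.Quotient.mk J '' B) := by
      intro p
      set N := d + p.totalDegree with hN
      set q : MvPolynomial (Fin m) K := ∑ k ∈ Finset.range (N + 1),
        v ^ (N - k) * homogeneousComponent k p with hq
      have hqhom : q.IsHomogeneous N := by
        rw [← mem_homogeneousSubmodule]
        apply Submodule.sum_mem
        intro k hk
        rw [Finset.mem_range] at hk
        rw [mem_homogeneousSubmodule]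
        have h1 := (hv.pow (N - k)).mul (homogeneousComponent_isHomogeneous k p)
        rwa [show 1 * (N - k) + k = N by omega] at h1
      have hpq : p - q ∈ J := by
        have hsum : ∑ k ∈ Finset.range (N + 1), homogeneousComponent k p = p := by
          have hsub : Finset.range (p.totalDegree + 1) ⊆ Finset.range (N + 1) :=
            Finset.range_subset_range.mpr (by omega)
          have h0 : ∀ k ∈ Finset.range (N + 1), k ∉ Finset.range (p.totalDegree + 1) →
              homogeneousComponent k p = 0 := by
            intro k _ hk
            rw [Finset.mem_range, not_lt] at hk
            exact homogeneousComponent_eq_zero _ p (by omega)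
          rw [← Finset.sum_subset hsub h0]
          exact sum_homogeneousComponent p
        have step1 : p - q = (∑ k ∈ Finset.range (N + 1), homogeneousComponent k p)
            - ∑ k ∈ Finset.range (N + 1), v ^ (N - k) * homogeneousComponent k p := by
          rw [hsum, ← hq]
        have step2 : p - q = ∑ k ∈ Finset.range (N + 1),
            (1 - v ^ (N - k)) * homogeneousComponent k p := by
          rw [step1, ← Finset.sum_sub_distrib]
          apply Finset.sum_congr rfl
          intro k _
          ring
        rw [step2]
        apply Ideal.sum_mem
        intro k _
        apply hJ ▸ le_sup_right (α := Ideal (MvPolynomial (Fin m) K))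
        rw [Ideal.mem_span_singleton]
        have hdvd : v - 1 ∣ 1 - v ^ (N - k) := by
          have := sub_dvd_pow_sub_pow v 1 (N - k)
          rw [one_pow] at this
          have h4 : v - 1 ∣ -(v ^ (N - k) - 1) := dvd_neg.mpr this
          rwa [neg_sub] at h4
        exact hdvd.mul_right _
      have : Ideal.Quotient.mk J p = Ideal.Quotient.mk J q :=
        Ideal.Quotient.eq.mpr hpq
      rw [this]
      exact descend p.totalDegree q (hN ▸ hqhom)
    rw [eq_top_iff]
    rintro x -
    obtain ⟨p, rfl⟩ := Ideal.Quotient.mk_surjective x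
    exact hall p
end

section
/- Let φ = ω(z)·e_ξ(z) ∈ K[[z_1,...,z_n]] = R* with ω a polynomial and ξ ∈ K^n. Then the inverse system R ⋆ φ = {p(∂_z)(φ) : p ∈ R} equals D_ω(z)·e_ξ(z), where D_ω = span{g(∂_z)(ω) : g ∈ R}; in particular it is finite-dimensional of dimension equal to the multiplicity dim span{g(∂_x)(ω) : g ∈ R}. -/
open MvPolynomial

namespace InvAux

lemma descFactorial_key (d b : ℕ) :
    (d+1).descFactorial (b+1) = (b+1) * d.descFactorial b + d.descFactorial (b+1) := by
  rw [Nat.succ_descFactorial_succ, Nat.descFactorial_succ]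
  rcases le_or_gt b d with h | h
  · rw [← add_mul]
    congr 1
    omega
  · rw [Nat.descFactorial_eq_zero_iff_lt.mpr h]
    simp

variable {K : Type*} [CommRing K] {n : ℕ}

lemma dpow_eq_sum_superset (β : Fin n →₀ ℕ) (f : MvPolynomial (Fin n) K)
    {A : Finset (Fin n →₀ ℕ)} (hA : f.support ⊆ A) :
    dpow β f = ∑ α ∈ A,
      monomial (α - β) ((∏ i ∈ β.support, ((α i).descFactorial (β i) : K)) * f.coeff α) := by
  rw [dpow]
  refine Finset.sum_subset hA fun α _ hα => ?_
  rw [MvPolynomial.notMem_support_iff.mp hα, mul_zero, map_zero]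

lemma dpow_add (β : Fin n →₀ ℕ) (f g : MvPolynomial (Fin n) K) :
    dpow β (f + g) = dpow β f + dpow β g := by
  rw [dpow_eq_sum_superset β (f+g) (Finset.Subset.trans (MvPolynomial.support_add) (Finset.Subset.refl _)),
      dpow_eq_sum_superset β f (Finset.subset_union_left),
      dpow_eq_sum_superset β g (Finset.subset_union_right), ← Finset.sum_add_distrib]
  refine Finset.sum_congr rfl fun α _ => ?_
  rw [coeff_add, mul_add, map_add]

lemma dpow_smul (β : Fin n →₀ ℕ) (a : K) (f : MvPolynomial (Fin n) K) :
    dpow β (a • f) = a • dpow β f := by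
  rw [dpow_eq_sum_superset β (a • f) (MvPolynomial.support_smul), dpow, Finset.smul_sum]
  refine Finset.sum_congr rfl fun α _ => ?_
  rw [MvPolynomial.coeff_smul, smul_eq_mul, mul_left_comm, ← smul_eq_mul, MvPolynomial.smul_monomial]

lemma dpow_monomial (β α : Fin n →₀ ℕ) (c : K) :
    dpow β (monomial α c)
      = monomial (α - β) (((∏ i, ((α i).descFactorial (β i)) : ℕ) : K) * c) := by
  classical
  have h1 : ((∏ i, ((α i).descFactorial (β i)) : ℕ) : K)
      = ∏ i ∈ β.support, ((α i).descFactorial (β i) : K) := by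
    push_cast
    refine (Finset.prod_subset (Finset.subset_univ _) fun i _ hi => ?_).symm
    rw [Finsupp.notMem_support_iff.mp hi, Nat.descFactorial_zero, Nat.cast_one]
  rcases eq_or_ne c 0 with rfl | hc
  · simp [dpow]
  · rw [dpow, support_monomial, if_neg hc, Finset.sum_singleton, coeff_monomial, if_pos rfl, h1]

lemma dpow_zero_idx (f : MvPolynomial (Fin n) K) : dpow 0 f = f := by
  conv_rhs => rw [f.as_sum]
  rw [dpow]
  refine Finset.sum_congr rfl fun α _ => ?_
  simp

lemma dpow_X_mul (β : Fin n →₀ ℕ) (i : Fin n) (q : MvPolynomial (Fin n) K) :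
    dpow β (X i * q)
      = X i * dpow β q + (β i : K) • dpow (β - Finsupp.single i 1) q := by
  induction q using MvPolynomial.induction_on' with
  | add f g hf hg =>
      rw [mul_add, dpow_add, hf, hg, dpow_add, dpow_add, mul_add, smul_add]; ring
  | monomial δ c =>
      classical
      set e : Fin n →₀ ℕ := Finsupp.single i 1 with he
      have hXm : ∀ (E : Fin n →₀ ℕ) (y : K), X i * monomial E y = monomial (E + e) y := by
        intro E y; rw [X, monomial_mul, one_mul, add_comm]
      rw [hXm, dpow_monomial, dpow_monomial, dpow_monomial, hXm, MvPolynomial.smul_monomial]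
      have hsplit : ∀ (γ η : Fin n →₀ ℕ), (∏ j, (γ j).descFactorial (η j))
          = (γ i).descFactorial (η i) * ∏ j ∈ Finset.univ.erase i, (γ j).descFactorial (η j) :=
        fun γ η => (Finset.mul_prod_erase Finset.univ _ (Finset.mem_univ i)).symm
      rw [hsplit (δ + e) β, hsplit δ β, hsplit δ (β - e)]
      have hδe : (δ + e) i = δ i + 1 := by simp [he]
      have hβe : (β - e) i = β i - 1 := by simp [he]
      have h2 : (∏ j ∈ Finset.univ.erase i, ((δ + e) j).descFactorial (β j))
          = ∏ j ∈ Finset.univ.erase i, (δ j).descFactorial (β j) := by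
        refine Finset.prod_congr rfl fun j hj => ?_
        rw [Finsupp.add_apply, he, Finsupp.single_apply,
          if_neg (Ne.symm (Finset.mem_erase.mp hj).1), add_zero]
      have h3 : (∏ j ∈ Finset.univ.erase i, (δ j).descFactorial ((β - e) j))
          = ∏ j ∈ Finset.univ.erase i, (δ j).descFactorial (β j) := by
        refine Finset.prod_congr rfl fun j hj => ?_
        rw [Finsupp.tsub_apply, he, Finsupp.single_apply,
          if_neg (Ne.symm (Finset.mem_erase.mp hj).1), Nat.sub_zero]
      rw [hδe, hβe, h2, h3]
      set R : ℕ := ∏ j ∈ Finset.univ.erase i, (δ j).descFactorial (β j) with hR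
      rcases hb : β i with _ | b'
      · have hexp : δ + e - β = δ - β + e := by
          ext j
          rcases eq_or_ne j i with rfl | hj
          · simp [he, Finsupp.single_apply, hb]
          · simp [he, Finsupp.single_apply, Ne.symm hj]
        rw [hexp]
        simp
      · have hexp1 : δ + e - β = δ - (β - e) := by
          ext j
          simp only [Finsupp.add_apply, Finsupp.tsub_apply, he, Finsupp.single_apply]
          rcases eq_or_ne i j with rfl | hj
          · rw [if_pos rfl]
            omega
          · rw [if_neg hj]
            omega
        rw [hexp1]
        rcases le_or_gt (b' + 1) (δ i) with hle | hlt
        · have hexp2 : δ - β + e = δ - (β - e) := by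
            ext j
            simp only [Finsupp.add_apply, Finsupp.tsub_apply, he, Finsupp.single_apply]
            rcases eq_or_ne i j with rfl | hj
            · rw [if_pos rfl]
              omega
            · rw [if_neg hj]
              omega
          rw [hexp2, ← map_add]
          congr 1
          rw [descFactorial_key]
          push_cast
          rw [smul_eq_mul]
          ring
        · have h0 : (δ i).descFactorial (b' + 1) = 0 :=
            Nat.descFactorial_eq_zero_iff_lt.mpr hlt
          rw [h0, zero_mul, Nat.cast_zero, zero_mul, map_zero, zero_add]
          congr 1
          rw [descFactorial_key, h0]
          push_cast
          rw [smul_eq_mul]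
          ring

lemma diffOp_eq_sum_superset (g f : MvPolynomial (Fin n) K)
    {A : Finset (Fin n →₀ ℕ)} (hA : g.support ⊆ A) :
    diffOp g f = ∑ β ∈ A, g.coeff β • dpow β f := by
  rw [diffOp]
  refine Finset.sum_subset hA fun β _ hβ => ?_
  rw [MvPolynomial.notMem_support_iff.mp hβ, zero_smul]

lemma diffOp_add_left (g₁ g₂ f : MvPolynomial (Fin n) K) :
    diffOp (g₁ + g₂) f = diffOp g₁ f + diffOp g₂ f := by
  rw [diffOp_eq_sum_superset (g₁ + g₂) f
        (Finset.Subset.trans (MvPolynomial.support_add) (Finset.Subset.refl _)),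
      diffOp_eq_sum_superset g₁ f (Finset.subset_union_left),
      diffOp_eq_sum_superset g₂ f (Finset.subset_union_right), ← Finset.sum_add_distrib]
  refine Finset.sum_congr rfl fun β _ => ?_
  rw [coeff_add, add_smul]

lemma diffOp_smul_left (a : K) (g f : MvPolynomial (Fin n) K) :
    diffOp (a • g) f = a • diffOp g f := by
  rw [diffOp_eq_sum_superset (a • g) f (MvPolynomial.support_smul), diffOp, Finset.smul_sum]
  refine Finset.sum_congr rfl fun β _ => ?_
  rw [MvPolynomial.coeff_smul, smul_eq_mul, mul_smul]

lemma diffOp_monomial_left (β : Fin n →₀ ℕ) (c : K) (f : MvPolynomial (Fin n) K) :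
    diffOp (monomial β c) f = c • dpow β f := by
  classical
  rcases eq_or_ne c 0 with rfl | hc
  · simp [diffOp]
  · rw [diffOp, support_monomial, if_neg hc, Finset.sum_singleton, coeff_monomial, if_pos rfl]

lemma diffOp_add_right (g f₁ f₂ : MvPolynomial (Fin n) K) :
    diffOp g (f₁ + f₂) = diffOp g f₁ + diffOp g f₂ := by
  rw [diffOp, diffOp, diffOp, ← Finset.sum_add_distrib]
  exact Finset.sum_congr rfl fun β _ => by rw [dpow_add, smul_add]

lemma diffOp_smul_right (a : K) (g f : MvPolynomial (Fin n) K) :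
    diffOp g (a • f) = a • diffOp g f := by
  rw [diffOp, diffOp, Finset.smul_sum]
  exact Finset.sum_congr rfl fun β _ => by rw [dpow_smul, smul_comm]

lemma diffOp_C_left (a : K) (f : MvPolynomial (Fin n) K) :
    diffOp (C a) f = a • f := by
  rw [MvPolynomial.C_apply, diffOp_monomial_left, dpow_zero_idx]

lemma dpow_add_single (β : Fin n →₀ ℕ) (i : Fin n) (f : MvPolynomial (Fin n) K) :
    dpow (β + Finsupp.single i 1) f = pderiv i (dpow β f) := by
  induction f using MvPolynomial.induction_on' with
  | add f g hf hg => rw [dpow_add, dpow_add, hf, hg, map_add]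
  | monomial α c =>
      set e : Fin n →₀ ℕ := Finsupp.single i 1 with he
      rw [dpow_monomial, dpow_monomial, pderiv_monomial]
      have hexp : α - (β + e) = α - β - e := tsub_add_eq_tsub_tsub α β e
      rw [hexp]
      congr 1
      have hsplit : ∀ (γ η : Fin n →₀ ℕ), (∏ j, (γ j).descFactorial (η j))
          = (γ i).descFactorial (η i) * ∏ j ∈ Finset.univ.erase i, (γ j).descFactorial (η j) :=
        fun γ η => (Finset.mul_prod_erase Finset.univ _ (Finset.mem_univ i)).symm
      rw [hsplit α (β + e), hsplit α β]
      have h2 : (∏ j ∈ Finset.univ.erase i, (α j).descFactorial ((β + e) j))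
          = ∏ j ∈ Finset.univ.erase i, (α j).descFactorial (β j) := by
        refine Finset.prod_congr rfl fun j hj => ?_
        rw [Finsupp.add_apply, he, Finsupp.single_apply,
          if_neg (Ne.symm (Finset.mem_erase.mp hj).1), add_zero]
      have h4 : (β + e) i = β i + 1 := by simp [he]
      have h5 : (α - β) i = α i - β i := rfl
      rw [h2, h4, h5, Nat.descFactorial_succ]
      push_cast
      ring

lemma diffOp_mul_X (g : MvPolynomial (Fin n) K) (i : Fin n) (ω : MvPolynomial (Fin n) K) :
    diffOp (g * X i) ω = pderiv i (diffOp g ω) := by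
  induction g using MvPolynomial.induction_on' with
  | add f g hf hg => rw [add_mul, diffOp_add_left, hf, hg, diffOp_add_left, map_add]
  | monomial β c =>
      have : (monomial β c : MvPolynomial (Fin n) K) * X i
          = monomial (β + Finsupp.single i 1) c := by
        rw [X, monomial_mul, mul_one]
      rw [this, diffOp_monomial_left, diffOp_monomial_left, dpow_add_single,
        Derivation.map_smul]

lemma diffOp_X_mul (θ : MvPolynomial (Fin n) K) (i : Fin n) (q : MvPolynomial (Fin n) K) :
    diffOp θ (X i * q) = X i * diffOp θ q + diffOp (pderiv i θ) q := by
  induction θ using MvPolynomial.induction_on' with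
  | add f g hf hg =>
      rw [diffOp_add_left, hf, hg, map_add, diffOp_add_left, diffOp_add_left, mul_add]
      ring
  | monomial β c =>
      rw [diffOp_monomial_left, dpow_X_mul, pderiv_monomial, diffOp_monomial_left,
        diffOp_monomial_left, smul_add, smul_smul, mul_smul_comm]


lemma evalsmul (ξ : Fin n → K) (a : K) (p : MvPolynomial (Fin n) K) :
    eval ξ (a • p) = a * eval ξ p := by
  rw [MvPolynomial.smul_eq_C_mul, map_mul, eval_C]

lemma dpow_C (γ : Fin n →₀ ℕ) (a : K) :
    dpow γ (C a) = if γ = 0 then C a else 0 := by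
  rw [MvPolynomial.C_apply, dpow_monomial]
  rcases eq_or_ne γ 0 with rfl | h
  · simp
  · rw [if_neg h]
    obtain ⟨i, hi⟩ : ∃ i, γ i ≠ 0 := by
      by_contra hcon
      push_neg at hcon
      exact h (Finsupp.ext hcon)
    have hz : (∏ j, (((0 : Fin n →₀ ℕ) j).descFactorial (γ j))) = 0 := by
      refine Finset.prod_eq_zero (Finset.mem_univ i) ?_
      rw [Finsupp.coe_zero, Pi.zero_apply]
      exact Nat.descFactorial_eq_zero_iff_lt.mpr (Nat.pos_of_ne_zero hi)
    rw [hz]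
    simp

lemma dpow_shift (c : Fin n → K) (q : MvPolynomial (Fin n) K) :
    ∀ γ, dpow γ (aeval (fun j => X j + C (c j)) q)
      = aeval (fun j => X j + C (c j)) (dpow γ q) := by
  induction q using MvPolynomial.induction_on with
  | C a =>
      intro γ
      simp only [aeval_C, MvPolynomial.algebraMap_eq, dpow_C]
      split_ifs <;> simp [MvPolynomial.algebraMap_eq]
  | add p q hp hq =>
      intro γ
      rw [map_add, dpow_add, hp, hq, dpow_add, map_add]
  | mul_X p i hp =>
      intro γ
      have hL : aeval (fun j => X j + C (c j)) (p * X i)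
          = X i * aeval (fun j => X j + C (c j)) p
            + c i • aeval (fun j => X j + C (c j)) p := by
        rw [map_mul, aeval_X, MvPolynomial.smul_eq_C_mul]
        ring
      rw [hL, dpow_add, dpow_X_mul, dpow_smul, hp, hp, mul_comm p (X i), dpow_X_mul,
        map_add, map_mul, aeval_X, map_smul]
      simp only [MvPolynomial.smul_eq_C_mul]
      ring

lemma diffOp_shift (c : Fin n → K) (θ q : MvPolynomial (Fin n) K) :
    diffOp θ (aeval (fun j => X j + C (c j)) q)
      = aeval (fun j => X j + C (c j)) (diffOp θ q) := by
  rw [diffOp, diffOp, map_sum]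
  exact Finset.sum_congr rfl fun β _ => by rw [dpow_shift, map_smul]

lemma eval_aeval' (g : Fin n → MvPolynomial (Fin n) K) (ξ : Fin n → K)
    (q : MvPolynomial (Fin n) K) :
    eval ξ (aeval g q) = eval (fun j => eval ξ (g j)) q := by
  induction q using MvPolynomial.induction_on with
  | C a => rw [aeval_C, MvPolynomial.algebraMap_eq, eval_C, eval_C]
  | add p q hp hq => simp only [map_add, hp, hq]
  | mul_X p i hp => simp only [map_mul, hp, aeval_X, eval_X]

lemma main_identity (ω : MvPolynomial (Fin n) K) (ξ : Fin n → K)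
    (p q : MvPolynomial (Fin n) K) :
    eval ξ (diffOp ω (p * q))
      = eval ξ (diffOp (diffOp (aeval (fun j => X j + C (ξ j)) p) ω) q) := by
  induction p using MvPolynomial.induction_on generalizing q with
  | C a =>
      have h1 : aeval (fun j => X j + C (ξ j)) (C a) = C a := by
        simp [MvPolynomial.algebraMap_eq]
      rw [h1, diffOp_C_left, diffOp_smul_left, ← MvPolynomial.smul_eq_C_mul,
        diffOp_smul_right, evalsmul]
  | add p₁ p₂ h₁ h₂ =>
      rw [add_mul, diffOp_add_right, map_add, h₁, h₂, map_add, diffOp_add_left,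
        diffOp_add_left, map_add]
  | mul_X p i hp =>
      rw [mul_assoc, hp (X i * q), diffOp_X_mul, map_add, map_mul, eval_X, map_mul, aeval_X,
        mul_add, diffOp_add_left, diffOp_mul_X, mul_comm _ (C (ξ i)),
        ← MvPolynomial.smul_eq_C_mul, diffOp_smul_left, diffOp_add_left, diffOp_smul_left,
        map_add, evalsmul]
      ring

lemma eval_zero_monomial' (E : Fin n →₀ ℕ) (a : K) :
    eval (0 : Fin n → K) (monomial E a) = if E = 0 then a else 0 := by
  rw [eval_monomial]
  rcases eq_or_ne E 0 with rfl | h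
  · simp
  · rw [if_neg h]
    obtain ⟨i, hi⟩ : ∃ i, E i ≠ 0 := by
      by_contra hcon
      push_neg at hcon
      exact h (Finsupp.ext hcon)
    rw [Finsupp.prod, Finset.prod_eq_zero (Finsupp.mem_support_iff.mpr hi)
      (by rw [Pi.zero_apply]; exact zero_pow hi), mul_zero]

lemma eval_zero_diffOp_monomial (θ : MvPolynomial (Fin n) K) (β : Fin n →₀ ℕ) :
    eval (0 : Fin n → K) (diffOp θ (monomial β 1))
      = θ.coeff β * ((∏ j, ((β j).factorial) : ℕ) : K) := by
  rw [diffOp, map_sum]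
  have hterm : ∀ γ, γ ≠ β →
      eval (0 : Fin n → K) (θ.coeff γ • dpow γ (monomial β 1)) = 0 := by
    intro γ hγ
    rw [evalsmul, dpow_monomial, eval_zero_monomial']
    rcases eq_or_ne (β - γ) 0 with h0 | h0
    · rw [if_pos h0]
      obtain ⟨j, hj⟩ : ∃ j, β j < γ j := by
        by_contra hcon
        push_neg at hcon
        refine (Ne.symm hγ) (Finsupp.ext fun j => le_antisymm ?_ (hcon j))
        have := congrArg (fun (t : Fin n →₀ ℕ) => t j) h0
        simp only [Finsupp.tsub_apply, Finsupp.coe_zero, Pi.zero_apply] at this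
        omega
      rw [Finset.prod_eq_zero (Finset.mem_univ j)
        (Nat.descFactorial_eq_zero_iff_lt.mpr hj)]
      simp
    · rw [if_neg h0, mul_zero]
  by_cases hβ : β ∈ θ.support
  · rw [Finset.sum_eq_single_of_mem β hβ (fun γ _ hγ => hterm γ hγ)]
    rw [evalsmul, dpow_monomial, eval_zero_monomial', if_pos (tsub_self β), mul_one]
    congr 1
    exact congrArg Nat.cast (Finset.prod_congr rfl fun j _ => Nat.descFactorial_self (β j))
  · rw [Finset.sum_eq_zero fun γ hγ => hterm γ (fun hc => hβ (hc ▸ hγ)),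
      MvPolynomial.notMem_support_iff.mp hβ, zero_mul]

lemma eval_diffOp_zero_imp (ξ : Fin n → K) [CharZero K] [NoZeroDivisors K] {θ : MvPolynomial (Fin n) K}
    (h : ∀ q, eval ξ (diffOp θ q) = 0) : θ = 0 := by
  ext β
  rw [MvPolynomial.coeff_zero]
  have h1 := h (aeval (R := K) (fun j => X j + C (-ξ j)) (monomial β (1 : K)))
  rw [diffOp_shift (fun j => -ξ j) θ (monomial β (1 : K)),
    eval_aeval' (fun j => X j + C (-ξ j))] at h1
  have h2 : (fun j => eval ξ (X j + C (-ξ j))) = (0 : Fin n → K) := by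
    funext j
    simp
  rw [h2, eval_zero_diffOp_monomial] at h1
  have h3 : ((∏ j, ((β j).factorial) : ℕ) : K) ≠ 0 := by
    have hpos : 0 < ∏ j, (β j).factorial := Finset.prod_pos fun j _ => Nat.factorial_pos _
    rw [Nat.cast_ne_zero]
    omega
  exact (mul_eq_zero.mp h1).resolve_right h3

lemma totalDegree_dpow_le (β : Fin n →₀ ℕ) (f : MvPolynomial (Fin n) K) :
    (dpow β f).totalDegree ≤ f.totalDegree := by
  refine le_trans (MvPolynomial.totalDegree_finset_sum _ _) (Finset.sup_le fun α hα => ?_)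
  by_cases hc : ((∏ i ∈ β.support, ((α i).descFactorial (β i) : K)) * f.coeff α) = 0
  · rw [hc, map_zero]
    simp
  · rw [MvPolynomial.totalDegree_monomial _ hc]
    refine le_trans ?_ (MvPolynomial.le_totalDegree hα)
    rw [Finsupp.sum_fintype _ _ (fun _ => rfl), Finsupp.sum_fintype _ _ (fun _ => rfl)]
    exact Finset.sum_le_sum fun j _ => by
      rw [Finsupp.tsub_apply]; exact Nat.sub_le _ _

lemma totalDegree_diffOp_le (g f : MvPolynomial (Fin n) K) :
    (diffOp g f).totalDegree ≤ f.totalDegree := by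
  refine le_trans (MvPolynomial.totalDegree_finset_sum _ _) (Finset.sup_le fun β _ => ?_)
  exact le_trans (MvPolynomial.totalDegree_smul_le _ _) (totalDegree_dpow_le β f)

end InvAux

open InvAux in
/-- Let `φ = ω(z)e_ξ(z) ∈ K[[z]] = R*` be the polynomial-exponential
functional `p ↦ (ω(∂_x)p)(ξ)` (hypothesized as the bundled functional `Φ` with pointwise
description `hΦ`, and similarly `PE θ` for `θ(z)e_ξ(z)`). Then the inverse system
`R ⋆ φ = {p ⋆ φ : p ∈ R}` (where `p ⋆ φ = φ ∘ M_p`) equals `D_ω(z)·e_ξ(z)` for the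
inverse system `D_ω = {g(∂)(ω) : g ∈ R}`; in particular it is finite-dimensional, of
dimension equal to the multiplicity `dim span{g(∂_x)(ω) : g ∈ R}` of `ω`. -/
theorem invsys_polyExp {K : Type*} [Field K] [CharZero K] {n : ℕ}
    (ω : MvPolynomial (Fin n) K) (ξ : Fin n → K)
    (PE : MvPolynomial (Fin n) K → Module.Dual K (MvPolynomial (Fin n) K))
    (hPE : ∀ θ q : MvPolynomial (Fin n) K, PE θ q = eval ξ (diffOp θ q))
    (Φ : Module.Dual K (MvPolynomial (Fin n) K)) (hΦ : Φ = PE ω) :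
    ({ψ : Module.Dual K (MvPolynomial (Fin n) K) |
        ∃ p : MvPolynomial (Fin n) K, ψ = Φ ∘ₗ LinearMap.mulLeft K p}
      = PE '' {θ : MvPolynomial (Fin n) K | ∃ g : MvPolynomial (Fin n) K, θ = diffOp g ω}) ∧
    Module.Finite K ↥(Submodule.span K
      {ψ : Module.Dual K (MvPolynomial (Fin n) K) |
        ∃ p : MvPolynomial (Fin n) K, ψ = Φ ∘ₗ LinearMap.mulLeft K p}) ∧
    Module.finrank K ↥(Submodule.span K
        {ψ : Module.Dual K (MvPolynomial (Fin n) K) |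
          ∃ p : MvPolynomial (Fin n) K, ψ = Φ ∘ₗ LinearMap.mulLeft K p})
      = Module.finrank K ↥(Submodule.span K
        {θ : MvPolynomial (Fin n) K | ∃ g : MvPolynomial (Fin n) K, θ = diffOp g ω}) := by
  classical
  have hmain : ∀ p q : MvPolynomial (Fin n) K,
      Φ (p * q) = PE (diffOp (aeval (R := K) (fun j => X j + C (ξ j)) p) ω) q := by
    intro p q
    rw [hΦ, hPE, hPE]
    exact main_identity ω ξ p q
  have hUV : ∀ g : MvPolynomial (Fin n) K,
      aeval (R := K) (fun j => X j + C (ξ j))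
        (aeval (R := K) (fun j => X j + C (-ξ j)) g) = g := by
    intro g
    induction g using MvPolynomial.induction_on with
    | C a => simp [MvPolynomial.algebraMap_eq]
    | add p q hp hq => rw [map_add, map_add, hp, hq]
    | mul_X p i hp =>
        rw [map_mul, map_mul, hp, aeval_X, map_add, aeval_X, aeval_C,
          MvPolynomial.algebraMap_eq, map_neg]
        ring
  let PEl : MvPolynomial (Fin n) K →ₗ[K] Module.Dual K (MvPolynomial (Fin n) K) :=
    { toFun := PE
      map_add' := fun a b => by
        apply LinearMap.ext
        intro q
        simp only [hPE, LinearMap.add_apply, diffOp_add_left, map_add]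
      map_smul' := fun c a => by
        apply LinearMap.ext
        intro q
        simp only [hPE, LinearMap.smul_apply, RingHom.id_apply, diffOp_smul_left, evalsmul,
          smul_eq_mul] }
  let Dl : MvPolynomial (Fin n) K →ₗ[K] MvPolynomial (Fin n) K :=
    { toFun := fun g => diffOp g ω
      map_add' := fun a b => diffOp_add_left a b ω
      map_smul' := fun c a => by
        simp only [RingHom.id_apply]
        exact diffOp_smul_left c a ω }
  let Ll : MvPolynomial (Fin n) K →ₗ[K] Module.Dual K (MvPolynomial (Fin n) K) :=
    { toFun := fun p => Φ ∘ₗ LinearMap.mulLeft K p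
      map_add' := fun a b => by
        apply LinearMap.ext
        intro q
        simp only [LinearMap.comp_apply, LinearMap.mulLeft_apply, LinearMap.add_apply, add_mul,
          map_add]
      map_smul' := fun c a => by
        apply LinearMap.ext
        intro q
        simp only [LinearMap.comp_apply, LinearMap.mulLeft_apply, LinearMap.smul_apply,
          RingHom.id_apply, smul_mul_assoc, map_smul] }
  have hset : {ψ : Module.Dual K (MvPolynomial (Fin n) K) |
        ∃ p : MvPolynomial (Fin n) K, ψ = Φ ∘ₗ LinearMap.mulLeft K p}
      = PE '' {θ : MvPolynomial (Fin n) K | ∃ g : MvPolynomial (Fin n) K, θ = diffOp g ω} := by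
    ext ψ
    constructor
    · rintro ⟨p, rfl⟩
      refine ⟨diffOp (aeval (R := K) (fun j => X j + C (ξ j)) p) ω,
        ⟨aeval (R := K) (fun j => X j + C (ξ j)) p, rfl⟩, ?_⟩
      apply LinearMap.ext
      intro q
      rw [LinearMap.comp_apply, LinearMap.mulLeft_apply]
      exact (hmain p q).symm
    · rintro ⟨θ, ⟨g, rfl⟩, rfl⟩
      refine ⟨aeval (R := K) (fun j => X j + C (-ξ j)) g, ?_⟩
      apply LinearMap.ext
      intro q
      rw [LinearMap.comp_apply, LinearMap.mulLeft_apply, hmain, hUV]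
  have hS1 : {ψ : Module.Dual K (MvPolynomial (Fin n) K) |
        ∃ p : MvPolynomial (Fin n) K, ψ = Φ ∘ₗ LinearMap.mulLeft K p}
      = ↑(LinearMap.range Ll) := by
    ext ψ
    simp only [Set.mem_setOf_eq, SetLike.mem_coe, LinearMap.mem_range]
    constructor
    · rintro ⟨p, rfl⟩; exact ⟨p, rfl⟩
    · rintro ⟨p, rfl⟩; exact ⟨p, rfl⟩
  have hS2 : {θ : MvPolynomial (Fin n) K | ∃ g : MvPolynomial (Fin n) K, θ = diffOp g ω}
      = ↑(LinearMap.range Dl) := by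
    ext θ
    simp only [Set.mem_setOf_eq, SetLike.mem_coe, LinearMap.mem_range]
    constructor
    · rintro ⟨g, rfl⟩; exact ⟨g, rfl⟩
    · rintro ⟨g, rfl⟩; exact ⟨g, rfl⟩
  have hinj : Function.Injective PEl := by
    refine (injective_iff_map_eq_zero PEl).mpr fun θ hθ => ?_
    refine eval_diffOp_zero_imp ξ fun q => ?_
    have h0 := congrArg (fun ψ : Module.Dual K (MvPolynomial (Fin n) K) => ψ q) hθ
    simp only [LinearMap.zero_apply] at h0
    rw [← hPE θ q]
    exact h0
  have hrange : LinearMap.range Ll = Submodule.map PEl (LinearMap.range Dl) := by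
    apply SetLike.ext'
    rw [Submodule.map_coe]
    calc (↑(LinearMap.range Ll) : Set (Module.Dual K (MvPolynomial (Fin n) K)))
        = {ψ : Module.Dual K (MvPolynomial (Fin n) K) |
            ∃ p : MvPolynomial (Fin n) K, ψ = Φ ∘ₗ LinearMap.mulLeft K p} := hS1.symm
      _ = PE '' {θ : MvPolynomial (Fin n) K |
            ∃ g : MvPolynomial (Fin n) K, θ = diffOp g ω} := hset
      _ = ⇑PEl '' ↑(LinearMap.range Dl) := by rw [hS2]; rfl
  haveI hfin : FiniteDimensional K (LinearMap.range Dl) := by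
    refine Submodule.finiteDimensional_of_le
      (S₂ := restrictTotalDegree (Fin n) K ω.totalDegree) ?_
    rintro θ ⟨g, rfl⟩
    rw [mem_restrictTotalDegree]
    exact totalDegree_diffOp_le g ω
  have hspan1 : Submodule.span K {ψ : Module.Dual K (MvPolynomial (Fin n) K) |
        ∃ p : MvPolynomial (Fin n) K, ψ = Φ ∘ₗ LinearMap.mulLeft K p}
      = LinearMap.range Ll := by
    rw [hS1, Submodule.span_eq]
  have hspan2 : Submodule.span K {θ : MvPolynomial (Fin n) K |
        ∃ g : MvPolynomial (Fin n) K, θ = diffOp g ω}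
      = LinearMap.range Dl := by
    rw [hS2, Submodule.span_eq]
  refine ⟨hset, ?_, ?_⟩
  · rw [hspan1, hrange]
    exact Module.Finite.map _ PEl
  · rw [hspan1, hspan2, hrange]
    exact ((Submodule.equivMapOfInjective PEl hinj (LinearMap.range Dl)).symm).finrank_eq
end
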